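/- Let p be a prime, n ≥ 1, x ∈ ℤ_p^n, Ψ = (ψ₁,…,ψₙ) an n-tuple of approximation functions, and N ∈ ℕ. For each 1 ≤ j ≤ n let t_j ∈ ℕ be the unique integer with p^{−t_j} ≤ ψ_j(N) < p^{−t_j + 1}, write x_j = Σ_{i≥0} x_{j,i} p^i with digits x_{j,i} ∈ {0,…,p−1}, and set X_{j,N} = Σ_{i=0}^{t_j} x_{j,i} p^i and ψ*_{j,N} = p^{t_j}. Then the vectors b₀ = (1, X_{1,N},…,X_{n,N}), b₁ = (0, ψ*_{1,N}, 0,…,0), …, bₙ = (0,…,0, ψ*_{n,N}) form a ℤ-basis of the lattice Λ_{N,x}, and consequently ( ∏_{i=1}^n ψ_i(N) )^{−1} ≤ |det Λ_{N,x}| = ∏_{i=1}^n ψ*_{i,N} ≤ p^n ( ∏_{i=1}^n ψ_i(N) )^{−1}. -/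

import Mathlib

open scoped BigOperators

/-- The `Ψ`-approximation lattice
`Λ_{N,x} = {(a₀,…,aₙ) ∈ ℤ^{n+1} : |a₀x_i − a_i|_p ≤ ψ_i(N) for all i}`. -/
def Lambda {p : ℕ} [Fact p.Prime] {n : ℕ} (x : Fin n → ℤ_[p])
    (Ψ : Fin n → ℕ → ℝ) (N : ℕ) : Set (Fin (n + 1) → ℤ) :=
  {a | ∀ i : Fin n, ‖(a 0 : ℤ_[p]) * x i - (a i.succ : ℤ_[p])‖ ≤ Ψ i N}

/-- The explicit triangular basis of the `Ψ`-approximation lattice: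
`b₀ = (1, X_{1,N}, …, X_{n,N})` and `b_j = ψ*_{j,N} e_j` for `1 ≤ j ≤ n`,
where `X_{j,N} = Σ_{i=0}^{t_j} x_{j,i} p^i` is the truncation of the `p`-adic digit
expansion of `x_j` (realized by `PadicInt.appr (x j) (t j + 1)`) and
`ψ*_{j,N} = p^{t_j}`. -/
noncomputable def latticeBasis {p : ℕ} [Fact p.Prime] {n : ℕ}
    (x : Fin n → ℤ_[p]) (t : Fin n → ℕ) : Fin (n + 1) → Fin (n + 1) → ℤ :=
  Fin.cons (Fin.cons 1 fun j => ((x j).appr (t j + 1) : ℤ))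
    fun i => Pi.single i.succ ((p : ℤ) ^ t i)

lemma latticeBasis_sum_apply_zero {p : ℕ} [Fact p.Prime] {n : ℕ}
    (x : Fin n → ℤ_[p]) (t : Fin n → ℕ) (c : Fin (n + 1) → ℤ) :
    (∑ j, c j • latticeBasis x t j) 0 = c 0 := by
  rw [Finset.sum_apply, Fin.sum_univ_succ]
  simp [latticeBasis, Pi.single_apply, (Fin.succ_ne_zero _)]

lemma latticeBasis_sum_apply_succ {p : ℕ} [Fact p.Prime] {n : ℕ}
    (x : Fin n → ℤ_[p]) (t : Fin n → ℕ) (c : Fin (n + 1) → ℤ) (m : Fin n) :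
    (∑ j, c j • latticeBasis x t j) m.succ
      = c 0 * ((x m).appr (t m + 1) : ℤ) + c m.succ * (p : ℤ) ^ t m := by
  rw [Finset.sum_apply, Fin.sum_univ_succ]
  simp only [latticeBasis, Fin.cons_zero, Fin.cons_succ, Pi.smul_apply, smul_eq_mul]
  congr 1
  rw [Finset.sum_eq_single m]
  · simp [Pi.single_apply]
  · intro i _ hi
    have hne : m.succ ≠ i.succ := fun h => hi (Fin.succ_injective _ h).symm
    simp [Pi.single_eq_of_ne hne]
  · simp

/-- The vectors `b₀, …, bₙ` form a `ℤ`-basis of `Λ_{N,x}`, the absolute value of the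
determinant of the corresponding basis matrix equals `∏ ψ*_{i,N} = ∏ p^{t_i}`, and
`(∏ ψ_i(N))⁻¹ ≤ ∏ p^{t_i} ≤ pⁿ (∏ ψ_i(N))⁻¹`. -/
theorem lattice_basis_and_det {p : ℕ} [Fact p.Prime] {n : ℕ}
    (x : Fin n → ℤ_[p]) (Ψ : Fin n → ℕ → ℝ) (hpos : ∀ i q, 0 < Ψ i q)
    (hlim : ∀ i, Filter.Tendsto (Ψ i) Filter.atTop (nhds 0)) (N : ℕ)
    (t : Fin n → ℕ)
    (ht : ∀ j, (p : ℝ) ^ (-(t j : ℝ)) ≤ Ψ j N ∧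
      Ψ j N < (p : ℝ) ^ (-(t j : ℝ) + 1)) :
    (∀ j, latticeBasis x t j ∈ Lambda x Ψ N) ∧
    (∀ v ∈ Lambda x Ψ N, ∃! c : Fin (n + 1) → ℤ,
      v = ∑ j, c j • latticeBasis x t j) ∧
    ((Matrix.of fun i j => latticeBasis x t j i).det.natAbs : ℝ)
      = ∏ i, (p : ℝ) ^ t i ∧
    (∏ i, Ψ i N)⁻¹ ≤ ∏ i, (p : ℝ) ^ t i ∧
    ∏ i, (p : ℝ) ^ t i ≤ (p : ℝ) ^ n * (∏ i, Ψ i N)⁻¹ := by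
  have hp : p.Prime := Fact.out
  have hp1 : (1 : ℝ) < p := by exact_mod_cast hp.one_lt
  have hp0 : (0 : ℝ) < p := by positivity
  have hrw : ∀ j : Fin n, (p : ℝ) ^ (-(t j : ℝ)) = (p : ℝ) ^ (-(t j : ℤ)) := by
    intro j
    rw [← Real.rpow_intCast (p : ℝ) (-(t j : ℤ))]
    push_cast
    ring_nf
  have hrw2 : ∀ j : Fin n, (p : ℝ) ^ (-(t j : ℝ) + 1) = (p : ℝ) ^ (-(t j : ℤ) + 1) := by
    intro j
    rw [← Real.rpow_intCast (p : ℝ) (-(t j : ℤ) + 1)]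
    push_cast
    ring_nf
  have hle : ∀ j, (p : ℝ) ^ (-(t j : ℤ)) ≤ Ψ j N := fun j => (hrw j) ▸ (ht j).1
  have hlt : ∀ j, Ψ j N < (p : ℝ) ^ (-(t j : ℤ) + 1) := fun j => (hrw2 j) ▸ (ht j).2
  have hmem : ∀ (z : ℤ_[p]) (j : Fin n), ‖z‖ ≤ Ψ j N ↔ ‖z‖ ≤ (p : ℝ) ^ (-(t j : ℤ)) := by
    intro z j
    constructor
    · intro h
      rw [PadicInt.norm_le_pow_iff_norm_lt_pow_add_one]
      exact lt_of_le_of_lt h (hlt j)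
    · intro h; exact h.trans (hle j)
  -- key approximation bound
  have happr : ∀ i : Fin n, ‖x i - ((x i).appr (t i + 1) : ℤ_[p])‖ ≤ (p : ℝ) ^ (-(t i : ℤ)) := by
    intro i
    have h1 : ‖x i - ((x i).appr (t i + 1) : ℤ_[p])‖ ≤ (p : ℝ) ^ (-(t i + 1 : ℕ) : ℤ) :=
      (PadicInt.norm_le_pow_iff_mem_span_pow _ _).mpr ((x i).appr_spec (t i + 1))
    refine h1.trans (zpow_le_zpow_right₀ hp1.le ?_)
    omega
  have hb : ∀ j, latticeBasis x t j ∈ Lambda x Ψ N := by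
    intro j
    refine Fin.cases ?_ ?_ j
    · intro i
      have : ((latticeBasis x t 0) 0 : ℤ) = 1 ∧
          ((latticeBasis x t 0) i.succ : ℤ) = ((x i).appr (t i + 1) : ℤ) := by
        constructor <;> simp [latticeBasis]
      rw [this.1, this.2, hmem _ i]
      push_cast
      rw [one_mul]
      exact happr i
    · intro k i
      have h0 : ((latticeBasis x t k.succ) 0 : ℤ) = 0 := by
        simp [latticeBasis, Pi.single_apply, (Fin.succ_ne_zero k).symm]
      rw [h0]
      push_cast
      rw [zero_mul, zero_sub, norm_neg]
      by_cases hki : k = i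
      · subst hki
        have h1 : ((latticeBasis x t k.succ) k.succ : ℤ) = (p : ℤ) ^ t k := by
          simp [latticeBasis]
        rw [h1, hmem _ k]
        push_cast
        rw [PadicInt.norm_p_pow]
      · have h1 : ((latticeBasis x t k.succ) i.succ : ℤ) = 0 := by
          have hne : i.succ ≠ k.succ := fun h => hki (Fin.succ_injective _ h).symm
          simp [latticeBasis, Pi.single_eq_of_ne hne]
        rw [h1]
        push_cast
        rw [norm_zero]
        exact (hpos i N).le
  refine ⟨hb, ?_, ?_, ?_, ?_⟩
  · -- unique representation
    intro v hv
    have hdvd : ∀ i : Fin n, (p : ℤ) ^ t i ∣ (v i.succ - v 0 * ((x i).appr (t i + 1) : ℤ)) := by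
      intro i
      rw [← PadicInt.norm_int_le_pow_iff_dvd]
      have h1 : ‖((v 0 : ℤ_[p]) * x i - (v i.succ : ℤ_[p]))‖ ≤ (p : ℝ) ^ (-(t i : ℤ)) :=
        (hmem _ i).mp (hv i)
      have h2 : ‖(v 0 : ℤ_[p]) * (x i - ((x i).appr (t i + 1) : ℤ_[p]))‖
          ≤ (p : ℝ) ^ (-(t i : ℤ)) := by
        calc ‖(v 0 : ℤ_[p]) * (x i - ((x i).appr (t i + 1) : ℤ_[p]))‖
            = ‖(v 0 : ℤ_[p])‖ * ‖x i - ((x i).appr (t i + 1) : ℤ_[p])‖ := norm_mul _ _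
          _ ≤ 1 * ‖x i - ((x i).appr (t i + 1) : ℤ_[p])‖ :=
              mul_le_mul_of_nonneg_right (PadicInt.norm_le_one _) (norm_nonneg _)
          _ = ‖x i - ((x i).appr (t i + 1) : ℤ_[p])‖ := one_mul _
          _ ≤ _ := happr i
      have key : ((v i.succ - v 0 * ((x i).appr (t i + 1) : ℤ) : ℤ) : ℤ_[p])
          = (v 0 : ℤ_[p]) * (x i - ((x i).appr (t i + 1) : ℤ_[p]))
            - ((v 0 : ℤ_[p]) * x i - (v i.succ : ℤ_[p])) := by
        push_cast
        ring
      rw [key, sub_eq_add_neg]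
      refine (PadicInt.nonarchimedean _ _).trans (max_le h2 ?_)
      rwa [norm_neg]
    set c : Fin (n + 1) → ℤ := Fin.cons (v 0)
      (fun i => (v i.succ - v 0 * ((x i).appr (t i + 1) : ℤ)) / (p : ℤ) ^ t i) with hc
    refine ⟨c, ?_, ?_⟩
    · funext k
      refine Fin.cases ?_ ?_ k
      · rw [latticeBasis_sum_apply_zero]
        simp [hc]
      · intro m
        rw [latticeBasis_sum_apply_succ]
        have hc0 : c 0 = v 0 := by simp [hc]
        have hcm : c m.succ = (v m.succ - v 0 * ((x m).appr (t m + 1) : ℤ)) / (p : ℤ) ^ t m := by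
          simp [hc]
        rw [hc0, hcm, Int.ediv_mul_cancel (hdvd m)]
        ring
    · intro c' hc'
      funext k
      refine Fin.cases ?_ ?_ k
      · have h0 : v 0 = c' 0 := by rw [hc', latticeBasis_sum_apply_zero]
        have h0' : c 0 = v 0 := by simp [hc]
        rw [h0', h0]
      · intro m
        have h0 : v 0 = c' 0 := by rw [hc', latticeBasis_sum_apply_zero]
        have hm : v m.succ = c' 0 * ((x m).appr (t m + 1) : ℤ) + c' m.succ * (p : ℤ) ^ t m := by
          rw [hc', latticeBasis_sum_apply_succ]
        have hcm : c m.succ = (v m.succ - v 0 * ((x m).appr (t m + 1) : ℤ)) / (p : ℤ) ^ t m := by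
          simp [hc]
        have hpne : ((p : ℤ) ^ t m) ≠ 0 :=
          pow_ne_zero _ (by exact_mod_cast (Fact.out : p.Prime).ne_zero)
        rw [hcm, h0, hm]
        rw [show c' 0 * ((x m).appr (t m + 1) : ℤ) + c' m.succ * (p : ℤ) ^ t m
            - c' 0 * ((x m).appr (t m + 1) : ℤ) = c' m.succ * (p : ℤ) ^ t m by ring]
        exact (Int.mul_ediv_cancel _ hpne).symm
  · -- determinant
    have hdet : (Matrix.of fun i j => latticeBasis x t j i).det = ∏ i, (p : ℤ) ^ t i := by
      rw [Matrix.det_of_lowerTriangular]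
      · rw [Fin.prod_univ_succ]
        have h00 : (Matrix.of fun i j => latticeBasis x t j i) 0 0 = 1 := by
          simp [latticeBasis]
        have hdiag : ∀ i : Fin n,
            (Matrix.of fun i j => latticeBasis x t j i) i.succ i.succ = (p : ℤ) ^ t i := by
          intro i; simp [latticeBasis]
        rw [h00, one_mul]
        exact Finset.prod_congr rfl fun i _ => hdiag i
      · intro i j hij
        have hij' : i < j := hij
        simp only [Matrix.of_apply]
        induction j using Fin.cases with
        | zero => exact absurd hij' (Fin.not_lt_zero i)
        | succ k =>
          have hne : i ≠ k.succ := ne_of_lt hij'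
          simp [latticeBasis, Pi.single_eq_of_ne hne]
    rw [hdet]
    rw [Nat.cast_natAbs]
    push_cast
    rw [abs_of_nonneg (by positivity)]
  · -- lower bound
    rw [← Finset.prod_inv_distrib]
    refine Finset.prod_le_prod (fun i _ => inv_nonneg.mpr (hpos i N).le) ?_
    intro i _
    have h : ((p : ℝ) ^ t i)⁻¹ ≤ Ψ i N := by
      have := hle i
      rwa [zpow_neg, zpow_natCast] at this
    exact (inv_le_comm₀ (hpos i N) (pow_pos hp0 (t i))).mpr h
  · -- upper bound
    have hrhs : (p : ℝ) ^ n * (∏ i, Ψ i N)⁻¹ = ∏ i : Fin n, (p : ℝ) * (Ψ i N)⁻¹ := by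
      rw [Finset.prod_mul_distrib, Finset.prod_const, Finset.prod_inv_distrib,
        Finset.card_univ, Fintype.card_fin]
    rw [hrhs]
    refine Finset.prod_le_prod (fun i _ => by positivity) ?_
    intro i _
    have h := hlt i
    have hz : (p : ℝ) ^ (-(t i : ℤ) + 1) = (p : ℝ) * ((p : ℝ) ^ t i)⁻¹ := by
      rw [zpow_add₀ hp0.ne', zpow_neg, zpow_natCast, zpow_one]
      ring
    rw [hz] at h
    have h2 : Ψ i N * (p : ℝ) ^ t i < p := by
      have := mul_lt_mul_of_pos_right h (pow_pos hp0 (t i))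
      rwa [mul_assoc, inv_mul_cancel₀ (by positivity), mul_one] at this
    rw [← div_eq_mul_inv, le_div_iff₀ (hpos i N)]
    rw [mul_comm]
    exact h2.le
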